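/- If γ : [0,T] → ℝ² is a W^{1,1} curve such that the set {t ∈ [0,T] : γ'(t) = 0} is finite, and θ₁, θ₂ : [0,T] → ℝ/πℤ are continuous functions both satisfying γ'(t) = u_i(t)·(cos θ_i(t), sin θ_i(t)) a.e. for some u_i ∈ L¹, then θ₁ = θ₂. -/

import Mathlib

open MeasureTheory Real

/-- uniqueness of continuous lifts with values in `ℝ/πℤ` of a `W^{1,1}` planar
curve whose derivative vanishes only on a finite set. -/
theorem stmt1 (T : ℝ) (hT : 0 < T) (γ g : ℝ → ℝ × ℝ)
    (hg : IntegrableOn g (Set.Icc 0 T))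
    (hγ : ∀ t ∈ Set.Icc 0 T, γ t = γ 0 + ∫ s in (0:ℝ)..t, g s)
    (hfin : {t ∈ Set.Icc 0 T | g t = 0}.Finite)
    (θ₁ θ₂ : ℝ → AddCircle Real.pi)
    (hc1 : ContinuousOn θ₁ (Set.Icc 0 T)) (hc2 : ContinuousOn θ₂ (Set.Icc 0 T))
    (u₁ u₂ : ℝ → ℝ)
    (hu1 : IntegrableOn u₁ (Set.Icc 0 T)) (hu2 : IntegrableOn u₂ (Set.Icc 0 T))
    (h1 : ∀ᵐ t ∂(volume.restrict (Set.Icc 0 T)),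
      ∃ a : ℝ, (a : AddCircle Real.pi) = θ₁ t ∧
        g t = u₁ t • (Real.cos a, Real.sin a))
    (h2 : ∀ᵐ t ∂(volume.restrict (Set.Icc 0 T)),
      ∃ a : ℝ, (a : AddCircle Real.pi) = θ₂ t ∧
        g t = u₂ t • (Real.cos a, Real.sin a)) :
    Set.EqOn θ₁ θ₂ (Set.Icc 0 T) := by
  set μ := volume.restrict (Set.Icc 0 T) with hμdef
  have hgne : ∀ᵐ t ∂μ, g t ≠ 0 := by
    rw [ae_iff]
    have hle : μ {t | ¬ g t ≠ 0} ≤ volume {t ∈ Set.Icc 0 T | g t = 0} := by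
      rw [hμdef, Measure.restrict_apply' measurableSet_Icc]
      apply measure_mono
      intro t ht
      simp only [Set.mem_inter_iff, Set.mem_setOf_eq, not_not] at ht ⊢
      exact ⟨ht.2, ht.1⟩
    exact le_antisymm (hle.trans_eq (hfin.measure_zero volume)) zero_le
  have hae : ∀ᵐ t ∂μ, θ₁ t = θ₂ t := by
    filter_upwards [h1, h2, hgne] with t ht1 ht2 hg0
    obtain ⟨a, ha, hga⟩ := ht1
    obtain ⟨b, hb, hgb⟩ := ht2
    have hu : u₁ t ≠ 0 := by
      intro h
      exact hg0 (by rw [hga, h, zero_smul])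
    have hcomp : u₁ t * Real.cos a = u₂ t * Real.cos b ∧
        u₁ t * Real.sin a = u₂ t * Real.sin b := by
      have := hga.symm.trans hgb
      simp only [Prod.smul_mk, smul_eq_mul, Prod.mk.injEq] at this
      exact this
    have hsin : Real.sin (a - b) = 0 := by
      have h0 : u₁ t * Real.sin (a - b) = 0 := by
        rw [Real.sin_sub]
        linear_combination Real.cos b * hcomp.2 - Real.sin b * hcomp.1
      exact (mul_eq_zero.mp h0).resolve_left hu
    obtain ⟨n, hn⟩ := Real.sin_eq_zero_iff.mp hsin
    have hab : (a : AddCircle Real.pi) = (b : AddCircle Real.pi) := by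
      have : ((a - b : ℝ) : AddCircle Real.pi) = 0 := by
        rw [AddCircle.coe_eq_zero_iff]
        exact ⟨n, by simpa [zsmul_eq_mul] using hn⟩
      have hsub : (a : AddCircle Real.pi) - (b : AddCircle Real.pi) = 0 := by
        push_cast
        exact this
      exact sub_eq_zero.mp hsub
    rw [← ha, ← hb, hab]
  intro t₀ ht₀
  by_contra hne
  obtain ⟨U, V, hU, hV, hmemU, hmemV, hUV⟩ := t2_separation hne
  have hA : θ₁ ⁻¹' U ∈ nhdsWithin t₀ (Set.Icc 0 T) := hc1 t₀ ht₀ (hU.mem_nhds hmemU)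
  have hB : θ₂ ⁻¹' V ∈ nhdsWithin t₀ (Set.Icc 0 T) := hc2 t₀ ht₀ (hV.mem_nhds hmemV)
  have hdiff : {t | θ₁ t ≠ θ₂ t} ∈ nhdsWithin t₀ (Set.Icc 0 T) := by
    filter_upwards [hA, hB] with t htA htB
    intro h
    exact Set.disjoint_left.mp hUV htA (h ▸ htB)
  rw [mem_nhdsWithin] at hdiff
  obtain ⟨W, hWopen, hWt₀, hWsub⟩ := hdiff
  obtain ⟨δ, hδ, hball⟩ := Metric.isOpen_iff.mp hWopen t₀ hWt₀
  set a' := max 0 (t₀ - δ) with ha'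
  set b' := min T (t₀ + δ) with hb'
  have hab : a' < b' := by
    apply max_lt
    · exact lt_min hT (by linarith [ht₀.1])
    · exact lt_min (by linarith [ht₀.2]) (by linarith)
  have hsub : Set.Ioo a' b' ⊆ {t | θ₁ t ≠ θ₂ t} ∩ Set.Icc 0 T := by
    intro t ht
    have h1 : (0:ℝ) ≤ t := le_of_lt (lt_of_le_of_lt (le_max_left _ _) ht.1)
    have h2 : t ≤ T := le_of_lt (lt_of_lt_of_le ht.2 (min_le_left _ _))
    have hball' : t ∈ Metric.ball t₀ δ := by
      rw [Metric.mem_ball, Real.dist_eq, abs_lt]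
      constructor
      · have := lt_of_le_of_lt (le_max_right _ _) ht.1; linarith
      · have := lt_of_lt_of_le ht.2 (min_le_right _ _); linarith
    exact ⟨hWsub ⟨hball hball', ⟨h1, h2⟩⟩, ⟨h1, h2⟩⟩
  have hnull : μ {t | θ₁ t ≠ θ₂ t} = 0 := hae
  have hIoo0 : μ (Set.Ioo a' b') = 0 :=
    measure_mono_null (fun t ht => (hsub ht).1) hnull
  have hIoopos : 0 < μ (Set.Ioo a' b') := by
    rw [hμdef, Measure.restrict_apply' measurableSet_Icc]
    have heq : Set.Ioo a' b' ∩ Set.Icc 0 T = Set.Ioo a' b' := by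
      apply Set.inter_eq_left.mpr
      intro t ht
      exact (hsub ht).2
    rw [heq, Real.volume_Ioo]
    exact ENNReal.ofReal_pos.mpr (by linarith)
  exact absurd hIoo0 (ne_of_gt hIoopos)
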